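/- Let D be a joint distribution of (X,Y) with ‖X‖ ≤ 1 almost surely and Y valued in {−1,+1}. Let w ∈ ℝ^d with ‖w‖ ≤ 1 and λ ∈ (0,1/2] be such that L_λ(w) = E[LeakyRelu_λ(−Y⟨w,X⟩)] < 0. Then there exists a threshold τ ≥ 0 such that: (1) Pr[|⟨w,X⟩| ≥ τ] ≥ |L_λ(w)|/(2λ), and (2) Pr[sgn(⟨w,X⟩) ≠ Y | |⟨w,X⟩| ≥ τ] ≤ λ. -/

import Mathlib

open MeasureTheory
open scoped RealInnerProductSpace

/-- The LeakyRelu function with leakage parameter `l`. -/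
noncomputable def leakyRelu (l z : ℝ) : ℝ := if 0 ≤ z then (1 - l) * z else l * z

/-- Integral of the indicator of `Iic a` over `Ioc 0 1`. -/
lemma aux_int_ind (a : ℝ) (h0 : 0 ≤ a) (h1 : a ≤ 1) :
    ∫ τ in Set.Ioc (0:ℝ) 1, (if τ ≤ a then (1:ℝ) else 0) = a := by
  have h : (fun τ : ℝ => if τ ≤ a then (1:ℝ) else 0)
      = fun τ => (Set.Iic a).indicator (fun _ => (1:ℝ)) τ := by
    funext τ; simp [Set.indicator_apply]
  rw [h, setIntegral_indicator measurableSet_Iic]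
  have h2 : Set.Ioc (0:ℝ) 1 ∩ Set.Iic a = Set.Ioc 0 a := by
    ext x
    simp only [Set.mem_inter_iff, Set.mem_Ioc, Set.mem_Iic]
    constructor
    · rintro ⟨⟨hx0, _⟩, hxa⟩; exact ⟨hx0, hxa⟩
    · rintro ⟨hx0, hxa⟩; exact ⟨⟨hx0, hxa.trans h1⟩, hxa⟩
  rw [h2]
  simp [Real.volume_Ioc, ENNReal.toReal_ofReal h0, h0]

/-- Pointwise identity for the LeakyRelu loss. -/
lemma aux_pointwise (lam y m : ℝ) (hy : y = 1 ∨ y = -1) :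
    leakyRelu lam (-y * m) = ((if y * m < 0 then (1:ℝ) else 0) - lam) * |m| := by
  rcases hy with rfl | rfl <;> unfold leakyRelu <;>
      rcases lt_trichotomy m 0 with h | h | h
  · rw [if_pos (by linarith : (0:ℝ) ≤ -1 * m), if_pos (by linarith : (1:ℝ) * m < 0),
      abs_of_neg h]; ring
  · simp [h]
  · rw [if_neg (by rw [not_le]; linarith : ¬ (0:ℝ) ≤ -1 * m),
      if_neg (by rw [not_lt]; linarith : ¬ (1:ℝ) * m < 0), abs_of_pos h]; ring
  · rw [if_neg (by rw [not_le]; linarith : ¬ (0:ℝ) ≤ -(-1) * m),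
      if_neg (by rw [not_lt]; linarith : ¬ (-1:ℝ) * m < 0), abs_of_neg h]; ring
  · simp [h]
  · rw [if_pos (by linarith : (0:ℝ) ≤ -(-1) * m), if_pos (by linarith : (-1:ℝ) * m < 0),
      abs_of_pos h]; ring

theorem rounding_lemma
    {d : ℕ} {Ω : Type*} [MeasurableSpace Ω] (μ : Measure Ω) [IsProbabilityMeasure μ]
    (X : Ω → EuclideanSpace ℝ (Fin d)) (Y : Ω → ℝ)
    (hX : Measurable X) (hY : Measurable Y)
    (hXball : ∀ᵐ ω ∂μ, ‖X ω‖ ≤ 1)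
    (hYpm : ∀ᵐ ω ∂μ, Y ω = 1 ∨ Y ω = -1)
    (w : EuclideanSpace ℝ (Fin d)) (hw : ‖w‖ ≤ 1)
    (lam : ℝ) (hlam0 : 0 < lam) (hlam : lam ≤ 1/2)
    (hL : ∫ ω, leakyRelu lam (-(Y ω) * ⟪w, X ω⟫) ∂μ < 0) :
    ∃ τ : ℝ, 0 ≤ τ ∧
      |∫ ω, leakyRelu lam (-(Y ω) * ⟪w, X ω⟫) ∂μ| / (2 * lam) ≤
        (μ {ω | τ ≤ |⟪w, X ω⟫|}).toReal ∧
      (ProbabilityTheory.cond μ {ω | τ ≤ |⟪w, X ω⟫|}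
        {ω | Real.sign ⟪w, X ω⟫ ≠ Y ω}).toReal ≤ lam := by
  classical
  set L : ℝ := ∫ ω, leakyRelu lam (-(Y ω) * ⟪w, X ω⟫) ∂μ with hLdef
  set m : Ω → ℝ := fun ω => ⟪w, X ω⟫ with hmdef
  have hm : Measurable m := measurable_const.inner hX
  have habs : ∀ᵐ ω ∂μ, |m ω| ≤ 1 := by
    filter_upwards [hXball] with ω h
    calc |m ω| ≤ ‖w‖ * ‖X ω‖ := abs_real_inner_le_norm _ _
      _ ≤ 1 := by nlinarith [norm_nonneg w, norm_nonneg (X ω)]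
  set err : Set Ω := {ω | Y ω * m ω < 0} with herrdef
  have herr : MeasurableSet err := measurableSet_lt (hY.mul hm) measurable_const
  set c : Ω → ℝ := fun ω => (if Y ω * m ω < 0 then (1:ℝ) else 0) - lam with hcdef
  have hc : Measurable c := (Measurable.ite herr measurable_const measurable_const).sub
    measurable_const
  have hcbdd : ∀ ω, |c ω| ≤ 1 := by
    intro ω; simp only [hcdef]; split_ifs <;> rw [abs_le] <;> constructor <;> linarith
  set ν : Measure ℝ := volume.restrict (Set.Ioc (0:ℝ) 1) with hνdef
  have hνfin : IsFiniteMeasure ν := by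
    constructor
    rw [hνdef, Measure.restrict_apply_univ, Real.volume_Ioc]
    simp
  set F : Ω × ℝ → ℝ := fun p => c p.1 * (if p.2 ≤ |m p.1| then (1:ℝ) else 0) with hFdef
  have hFmeas : Measurable F := by
    apply (hc.comp measurable_fst).mul
    exact Measurable.ite (measurableSet_le measurable_snd ((hm.abs).comp measurable_fst))
      measurable_const measurable_const
  have hFint : Integrable F (μ.prod ν) := by
    refine (integrable_const (1:ℝ)).mono' hFmeas.aestronglyMeasurable (ae_of_all _ fun p => ?_)
    rw [Real.norm_eq_abs, abs_mul]
    have := hcbdd p.1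
    split_ifs <;> simp <;> nlinarith [abs_nonneg (c p.1)]
  -- Step 1 : L = ∫ c * |m|
  have step1 : L = ∫ ω, c ω * |m ω| ∂μ := by
    apply integral_congr_ae
    filter_upwards [hYpm] with ω hy
    exact aux_pointwise lam (Y ω) (m ω) hy
  -- Step 2 : c ω * |m ω| = ∫ τ, F (ω, τ) ∂ν for a.e. ω
  have step2 : ∫ ω, c ω * |m ω| ∂μ = ∫ ω, ∫ τ, F (ω, τ) ∂ν ∂μ := by
    apply integral_congr_ae
    filter_upwards [habs] with ω h
    rw [hνdef]
    simp only [hFdef]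
    rw [integral_const_mul, aux_int_ind _ (abs_nonneg _) h]
  -- Step 3 : Fubini
  set g : ℝ → ℝ := fun τ => ∫ ω, F (ω, τ) ∂μ with hgdef
  have step3 : ∫ ω, ∫ τ, F (ω, τ) ∂ν ∂μ = ∫ τ, g τ ∂ν := by
    exact integral_integral_swap hFint
  have hgint : Integrable g ν := hFint.swap.integral_prod_left
  have hLg : ∫ τ, g τ ∂ν = L := by rw [← step3, ← step2, ← step1]
  have hν_univ : (ν Set.univ) = 1 := by
    rw [hνdef, Measure.restrict_apply_univ, Real.volume_Ioc]; simp
  -- find good τ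
  have key : ∃ τ ∈ Set.Ioc (0:ℝ) 1, g τ ≤ L := by
    by_contra hcon
    push_neg at hcon
    have hpos : ∀ᵐ τ ∂ν, 0 < g τ - L := by
      rw [hνdef]
      rw [ae_restrict_iff' measurableSet_Ioc]
      exact ae_of_all _ fun τ hτ => by linarith [hcon τ hτ]
    have hnn : 0 ≤ᵐ[ν] fun τ => g τ - L := hpos.mono fun τ h => le_of_lt h
    have hint : Integrable (fun τ => g τ - L) ν := hgint.sub (integrable_const L)
    have hzero : ∫ τ, (g τ - L) ∂ν = 0 := by
      rw [integral_sub hgint (integrable_const L), hLg, integral_const]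
      rw [measureReal_def, hν_univ]; simp
    have heq := (integral_eq_zero_iff_of_nonneg_ae hnn hint).1 hzero
    have hfalse : ∀ᵐ τ ∂ν, False := by
      filter_upwards [heq, hpos] with τ h1 h2
      rw [Pi.zero_apply] at h1
      linarith
    have := ae_iff.mp hfalse
    simp only [not_false_iff] at this
    rw [Set.setOf_true, hν_univ] at this
    exact one_ne_zero this
  obtain ⟨τ, hτmem, hgτ⟩ := key
  obtain ⟨hτ0, hτ1⟩ := hτmem
  set A : Set Ω := {ω | τ ≤ |m ω|} with hAdef
  have hA : MeasurableSet A := measurableSet_le measurable_const hm.abs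
  -- compute g τ
  have hindA : Integrable (fun ω => if τ ≤ |m ω| then (1:ℝ) else 0) μ := by
    refine (integrable_const (1:ℝ)).mono'
      ((Measurable.ite (measurableSet_le measurable_const hm.abs) measurable_const
        measurable_const).aestronglyMeasurable) (ae_of_all _ fun ω => ?_)
    split_ifs <;> simp
  have hindEA : Integrable (fun ω => if ω ∈ err ∩ A then (1:ℝ) else 0) μ := by
    refine (integrable_const (1:ℝ)).mono'
      ((Measurable.ite (herr.inter hA) measurable_const
        measurable_const).aestronglyMeasurable) (ae_of_all _ fun ω => ?_)
    split_ifs <;> simp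
  have hgτ_eq : g τ = (μ (err ∩ A)).toReal - lam * (μ A).toReal := by
    have hpw : (fun ω => F (ω, τ)) = fun ω =>
        (if ω ∈ err ∩ A then (1:ℝ) else 0) - lam * (if τ ≤ |m ω| then (1:ℝ) else 0) := by
      funext ω
      simp only [hFdef, hcdef, herrdef, hAdef, Set.mem_inter_iff, Set.mem_setOf_eq]
      by_cases h1 : Y ω * m ω < 0 <;> by_cases h2 : τ ≤ |m ω| <;> simp [h1, h2]
    rw [hgdef]
    simp only [hpw]
    rw [integral_sub hindEA (hindA.const_mul lam), integral_const_mul]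
    congr 1
    · have : (fun ω => if ω ∈ err ∩ A then (1:ℝ) else 0)
          = fun ω => (err ∩ A).indicator (fun _ => (1:ℝ)) ω := by
        funext ω; simp [Set.indicator_apply]
      rw [this, integral_indicator_const _ (herr.inter hA)]; simp [measureReal_def]
    · congr 1
      have : (fun ω => if τ ≤ |m ω| then (1:ℝ) else 0)
          = fun ω => A.indicator (fun _ => (1:ℝ)) ω := by
        funext ω; simp [hAdef, Set.indicator_apply]
      rw [this, integral_indicator_const _ hA]; simp [measureReal_def]
  set P : ℝ := (μ A).toReal with hPdef
  set Q : ℝ := (μ (err ∩ A)).toReal with hQdef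
  have hQ0 : 0 ≤ Q := ENNReal.toReal_nonneg
  have hQlam : Q - lam * P ≤ L := by rw [← hgτ_eq]; exact hgτ
  have hLneg : L < 0 := hL
  have habsL : |L| = -L := abs_of_neg hLneg
  have hPge : |L| / (2 * lam) ≤ P := by
    rw [habsL, div_le_iff₀ (by positivity)]
    nlinarith
  have hnegL : 0 < -L := by linarith
  have hPpos : 0 < P := lt_of_lt_of_le (by
    rw [habsL]; exact div_pos hnegL (by positivity)) hPge
  have hQle : Q ≤ lam * P := by linarith
  refine ⟨τ, le_of_lt hτ0, hPge, ?_⟩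
  -- conditional probability bound
  set S : Set Ω := {ω | Real.sign (m ω) ≠ Y ω} with hSdef
  have hAS : μ (A ∩ S) = μ (err ∩ A) := by
    apply measure_congr
    rw [Filter.eventuallyEq_set]
    filter_upwards [hYpm] with ω hy
    simp only [Set.mem_inter_iff, hAdef, hSdef, herrdef, Set.mem_setOf_eq]
    constructor
    · rintro ⟨hτm, hs⟩
      refine ⟨?_, hτm⟩
      rcases lt_trichotomy (m ω) 0 with hmω | hmω | hmω
      · rcases hy with hy1 | hy1
        · rw [hy1]; linarith
        · exfalso; apply hs; rw [Real.sign_of_neg hmω, hy1]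
      · exfalso; rw [hmω] at hτm; simp at hτm; linarith
      · rcases hy with hy1 | hy1
        · exfalso; apply hs; rw [Real.sign_of_pos hmω, hy1]
        · rw [hy1]; linarith
    · rintro ⟨hlt, hτm⟩
      refine ⟨hτm, ?_⟩
      rcases lt_trichotomy (m ω) 0 with hmω | hmω | hmω
      · rcases hy with hy1 | hy1
        · rw [Real.sign_of_neg hmω, hy1]; norm_num
        · exfalso; rw [hy1] at hlt; nlinarith
      · exfalso; rw [hmω] at hτm; simp at hτm; linarith
      · rcases hy with hy1 | hy1
        · exfalso; rw [hy1] at hlt; nlinarith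
        · rw [Real.sign_of_pos hmω, hy1]; norm_num
  have hcond : (ProbabilityTheory.cond μ A S).toReal = P⁻¹ * Q := by
    rw [ProbabilityTheory.cond_apply hA, hAS, ENNReal.toReal_mul, ENNReal.toReal_inv]
  rw [hcond]
  calc P⁻¹ * Q ≤ P⁻¹ * (lam * P) := by
        apply mul_le_mul_of_nonneg_left hQle (by positivity)
    _ = lam := by field_simp
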